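/- For every m ≥ 8, there exists no real characteristic matrix on the dual cyclic polytope C⁴(m)*: that is, no 4×m matrix over ℤ/2 such that for every vertex-set of C⁴(m)* (every 4-subset of {1,…,m} of the form {1,i,i+1,m} with 2 ≤ i ≤ m-2, or {i,i+1,j,j+1} with 1 ≤ i < j-1 ≤ m-2) the corresponding 4×4 minor is nonzero in ℤ/2. -/

import Mathlib

/-- The 4×4 minor of a (4 × ℕ-indexed, 1-based columns) `ℤ/2`-matrix on columns `a,b,c,d`. -/
def minor4 (lam : Fin 4 → ℕ → ZMod 2) (a b c d : ℕ) : ZMod 2 :=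
  Matrix.det (Matrix.of fun (p q : Fin 4) => lam p (![a, b, c, d] q))

def det3 (b c d : Fin 4 → ZMod 2) (i j k : Fin 4) : ZMod 2 :=
  b i * (c j * d k - c k * d j) - c i * (b j * d k - b k * d j) + d i * (b j * c k - b k * c j)

def dstd (a b c d : Fin 4 → ZMod 2) : ZMod 2 :=
  a 0 * det3 b c d 1 2 3 - a 1 * det3 b c d 0 2 3 + a 2 * det3 b c d 0 1 3
    - a 3 * det3 b c d 0 1 2

def E (i : Fin 4) : Fin 4 → ZMod 2 := fun p => if p = i then 1 else 0

theorem minor4_eq_dstd (lam : Fin 4 → ℕ → ZMod 2) (a b c d : ℕ) :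
    minor4 lam a b c d =
      dstd (fun p => lam p a) (fun p => lam p b) (fun p => lam p c) (fun p => lam p d) := by
  simp [minor4, dstd, det3, Matrix.det_succ_row_zero, Fin.sum_univ_succ,
    Matrix.submatrix, Fin.succAbove,
    show (Fin.succ 2 : Fin 4) = 3 by decide, show (Fin.castSucc 2 : Fin 3) = 0 by decide,
    show (Fin.succ 2 : Fin 3) = 1 by decide, show (Fin.castSucc 2 : Fin 4) = 2 by decide]
  simp only [sub_eq_add_neg, ZMod.neg_eq_self_mod_two]
  ring

set_option maxHeartbeats 4000000 in
theorem key : ∀ w5 w6 w7 w8 : Fin 4 → ZMod 2,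
    ¬(dstd (E 0) (E 1) (E 3) w5 ≠ 0 ∧ dstd (E 1) (E 2) (E 3) w5 ≠ 0 ∧
      dstd (E 0) (E 1) w5 w6 ≠ 0 ∧ dstd (E 1) (E 2) w5 w6 ≠ 0 ∧
      dstd (E 2) (E 3) w5 w6 ≠ 0 ∧
      dstd (E 0) (E 1) w6 w7 ≠ 0 ∧ dstd (E 1) (E 2) w6 w7 ≠ 0 ∧
      dstd (E 2) (E 3) w6 w7 ≠ 0 ∧ dstd (E 3) w5 w6 w7 ≠ 0 ∧
      dstd (E 0) (E 1) w7 w8 ≠ 0 ∧ dstd (E 1) (E 2) w7 w8 ≠ 0 ∧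
      dstd (E 2) (E 3) w7 w8 ≠ 0 ∧ dstd (E 3) w5 w7 w8 ≠ 0 ∧
      dstd w5 w6 w7 w8 ≠ 0) := by decide

/-- For every `m ≥ 8` there is no real characteristic matrix on `C⁴(m)*`: no 4×m matrix
over `ℤ/2` whose 4×4 minors on all vertex sets of `C⁴(m)*` (the sets `{1,i,i+1,m}` with
`2 ≤ i ≤ m-2` and `{i,i+1,j,j+1}` with `1 ≤ i < j-1 ≤ m-2`) are nonzero. -/
theorem stmt_5 (m : ℕ) (hm : 8 ≤ m) :
    ¬ ∃ lam : Fin 4 → ℕ → ZMod 2,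
      (∀ i : ℕ, 2 ≤ i → i ≤ m - 2 → minor4 lam 1 i (i + 1) m ≠ 0) ∧
      (∀ i j : ℕ, 1 ≤ i → i + 1 < j → j ≤ m - 1 → minor4 lam i (i + 1) j (j + 1) ≠ 0) := by
  rintro ⟨lam, -, h2⟩
  have H : ∀ i j : ℕ, 1 ≤ i → i + 1 < j → j ≤ 7 → minor4 lam i (i + 1) j (j + 1) ≠ 0 :=
    fun i j hi hij hj => h2 i j hi hij (by omega)
  -- the matrix of columns 1..4
  set A : Matrix (Fin 4) (Fin 4) (ZMod 2) :=
    Matrix.of (fun p q : Fin 4 => lam p ((q : ℕ) + 1)) with hAdef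
  have hmat : (Matrix.of fun (p q : Fin 4) => lam p (![1, 2, 3, 4] q)) = A := by
    ext p q
    fin_cases q <;> rfl
  have hAeq : minor4 lam 1 2 3 4 = A.det := by rw [minor4, hmat]
  have h13 := H 1 3 (by norm_num) (by norm_num) (by norm_num)
  norm_num at h13
  have hA : IsUnit A.det := isUnit_iff_ne_zero.mpr (by rw [← hAeq]; exact h13)
  set g : Matrix (Fin 4) (Fin 4) (ZMod 2) := A⁻¹ with hgdef
  have hgA : g * A = 1 := Matrix.nonsing_inv_mul A hA
  have hgdet : g.det ≠ 0 := by
    intro h0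
    have := congrArg Matrix.det hgA
    rw [Matrix.det_mul, Matrix.det_one, h0, zero_mul] at this
    exact zero_ne_one this
  set lam' : Fin 4 → ℕ → ZMod 2 := fun p n => ∑ r, g p r * lam r n with hlam'
  have htrans : ∀ a b c d : ℕ, minor4 lam' a b c d = g.det * minor4 lam a b c d := by
    intro a b c d
    have : (Matrix.of fun (p q : Fin 4) => lam' p (![a, b, c, d] q)) =
        g * Matrix.of fun (p q : Fin 4) => lam p (![a, b, c, d] q) := by
      ext p q
      simp [hlam', Matrix.mul_apply]
    rw [minor4, this, Matrix.det_mul, ← minor4]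
  have H' : ∀ i j : ℕ, 1 ≤ i → i + 1 < j → j ≤ 7 → minor4 lam' i (i + 1) j (j + 1) ≠ 0 :=
    fun i j hi hij hj => by
      rw [htrans]; exact mul_ne_zero hgdet (H i j hi hij hj)
  -- columns 1..4 of lam' are the standard basis
  have hcol : ∀ q : Fin 4, (fun p => lam' p ((q : ℕ) + 1)) = E q := by
    intro q
    funext p
    have : lam' p ((q : ℕ) + 1) = (g * A) p q := by
      simp [hlam', Matrix.mul_apply, hAdef]
    rw [this, hgA, Matrix.one_apply]
    rfl
  have e1 : (fun p => lam' p 1) = E 0 := hcol 0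
  have e2 : (fun p => lam' p 2) = E 1 := hcol 1
  have e3 : (fun p => lam' p 3) = E 2 := hcol 2
  have e4 : (fun p => lam' p 4) = E 3 := hcol 3
  have get : ∀ i j : ℕ, 1 ≤ i → i + 1 < j → j ≤ 7 →
      dstd (fun p => lam' p i) (fun p => lam' p (i+1)) (fun p => lam' p j)
        (fun p => lam' p (j+1)) ≠ 0 := by
    intro i j hi hij hj
    rw [← minor4_eq_dstd]; exact H' i j hi hij hj
  have c14 := get 1 4 (by norm_num) (by norm_num) (by norm_num)
  have c24 := get 2 4 (by norm_num) (by norm_num) (by norm_num)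
  have c15 := get 1 5 (by norm_num) (by norm_num) (by norm_num)
  have c25 := get 2 5 (by norm_num) (by norm_num) (by norm_num)
  have c35 := get 3 5 (by norm_num) (by norm_num) (by norm_num)
  have c16 := get 1 6 (by norm_num) (by norm_num) (by norm_num)
  have c26 := get 2 6 (by norm_num) (by norm_num) (by norm_num)
  have c36 := get 3 6 (by norm_num) (by norm_num) (by norm_num)
  have c46 := get 4 6 (by norm_num) (by norm_num) (by norm_num)
  have c17 := get 1 7 (by norm_num) (by norm_num) (by norm_num)
  have c27 := get 2 7 (by norm_num) (by norm_num) (by norm_num)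
  have c37 := get 3 7 (by norm_num) (by norm_num) (by norm_num)
  have c47 := get 4 7 (by norm_num) (by norm_num) (by norm_num)
  have c57 := get 5 7 (by norm_num) (by norm_num) (by norm_num)
  norm_num [e1, e2, e3, e4] at c14 c24 c15 c25 c35 c16 c26 c36 c46 c17 c27 c37 c47 c57
  exact key (fun p => lam' p 5) (fun p => lam' p 6) (fun p => lam' p 7) (fun p => lam' p 8)
    ⟨c14, c24, c15, c25, c35, c16, c26, c36, c46, c17, c27, c37, c47, c57⟩
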